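/- For probability measures P, Q on a countable set, lim_{α↓0} D_α(P‖Q) = −log Q({x : P(x) > 0}), where D_α(P‖Q) = (1/(α−1)) log Σ_x P(x)^α Q(x)^{1−α}. -/

import Mathlib

open scoped ENNReal Topology
open Classical

/-- The Rényi divergence of order `α ≠ 1` of two probability mass functions `p, q` on a
countable set, with values in the extended reals:
`(α−1)⁻¹ log Σ_x p(x)^α q(x)^{1−α}`, where the sum is computed in `ℝ≥0∞`; for `α = 1`
it is the Kullback–Leibler divergence. -/
noncomputable def renyiD {X : Type*} (α : ℝ) (p q : X → ℝ) : EReal :=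
  if α = 1 then
    (if ∀ x, q x = 0 → p x = 0 then
      ((∑' x, ENNReal.ofReal (p x * Real.log (p x / q x) + q x - p x) : ℝ≥0∞) : EReal)
    else ⊤)
  else ((α - 1)⁻¹ : ℝ) *
    ENNReal.log (∑' x, ENNReal.ofReal (p x) ^ α * ENNReal.ofReal (q x) ^ (1 - α))

section Aux
open Filter MeasureTheory

private lemma aux_sum_tendsto {X : Type*} [Countable X]
    (p q : X → ℝ) (hp : ∀ x, 0 ≤ p x) (hq : ∀ x, 0 ≤ q x)
    (hp1 : HasSum p 1) (hq1 : HasSum q 1) :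
    Tendsto (fun α : ℝ => ∑' x, ENNReal.ofReal (p x) ^ α * ENNReal.ofReal (q x) ^ (1 - α))
      (𝓝[>] (0:ℝ)) (𝓝 (∑' x, if 0 < p x then ENNReal.ofReal (q x) else 0)) := by
  letI : MeasurableSpace X := ⊤
  haveI : MeasurableSingletonClass X := ⟨fun _ => trivial⟩
  have hlt : ∀ᶠ α in 𝓝[>] (0:ℝ), α ∈ Set.Ioo (0:ℝ) 1 := by
    filter_upwards [Ioo_mem_nhdsGT one_pos] with α hα using hα
  have key := MeasureTheory.tendsto_lintegral_filter_of_dominated_convergence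
    (μ := Measure.count (α := X)) (l := 𝓝[>] (0:ℝ))
    (F := fun α x => ENNReal.ofReal (p x) ^ α * ENNReal.ofReal (q x) ^ (1 - α))
    (f := fun x => if 0 < p x then ENNReal.ofReal (q x) else 0)
    (fun x => ENNReal.ofReal (p x) + ENNReal.ofReal (q x))
    (Eventually.of_forall fun _ => measurable_of_countable _)
    ?_ ?_ ?_
  · simpa only [MeasureTheory.lintegral_count] using key
  · -- bound
    filter_upwards [hlt] with α hα
    refine MeasureTheory.ae_of_all _ fun x => ?_
    set m := ENNReal.ofReal (p x) + ENNReal.ofReal (q x) with hm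
    by_cases hm0 : m = 0
    · have hp0 : ENNReal.ofReal (p x) = 0 := by
        simpa using (add_eq_zero.mp hm0).1
      rw [hp0, ENNReal.zero_rpow_of_pos hα.1, zero_mul]
      exact bot_le
    · calc ENNReal.ofReal (p x) ^ α * ENNReal.ofReal (q x) ^ (1 - α)
          ≤ m ^ α * m ^ (1 - α) :=
            mul_le_mul' (ENNReal.rpow_le_rpow le_self_add hα.1.le)
              (ENNReal.rpow_le_rpow le_add_self (by linarith [hα.2]))
        _ = m := by
            rw [← ENNReal.rpow_add _ _ hm0 (by simp [hm])]
            simp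
  · -- finite integral
    rw [MeasureTheory.lintegral_count, ENNReal.tsum_add,
      ← ENNReal.ofReal_tsum_of_nonneg hp hp1.summable,
      ← ENNReal.ofReal_tsum_of_nonneg hq hq1.summable, hp1.tsum_eq, hq1.tsum_eq]
    simp
  · -- pointwise limit
    refine MeasureTheory.ae_of_all _ fun x => ?_
    by_cases hpx : 0 < p x
    · simp only [if_pos hpx]
      by_cases hqx : 0 < q x
      · have heq : ∀ α : ℝ, ENNReal.ofReal (p x) ^ α * ENNReal.ofReal (q x) ^ (1 - α)
            = ENNReal.ofReal (p x ^ α * q x ^ (1 - α)) := fun α => by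
          rw [ENNReal.ofReal_rpow_of_pos hpx, ENNReal.ofReal_rpow_of_pos hqx,
            ENNReal.ofReal_mul (Real.rpow_nonneg (hp x) α)]
        simp only [heq]
        have : Tendsto (fun α : ℝ => p x ^ α * q x ^ (1 - α)) (𝓝[>] 0) (𝓝 (q x)) := by
          have h1 : Tendsto (fun α : ℝ => p x ^ α) (𝓝 (0:ℝ)) (𝓝 1) := by
            have := Filter.Tendsto.comp (Real.continuousAt_rpow ((p x), (0:ℝ)) (Or.inl hpx.ne'))
              ((continuous_const.prodMk continuous_id).tendsto (0:ℝ))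
            simpa [Function.comp_def, Real.rpow_zero] using this
          have h2 : Tendsto (fun α : ℝ => q x ^ (1 - α)) (𝓝 (0:ℝ)) (𝓝 (q x)) := by
            have := Filter.Tendsto.comp (Real.continuousAt_rpow ((q x), (1:ℝ)) (Or.inl hqx.ne'))
              (tendsto_const_nhds.prodMk_nhds
                (by simpa using ((tendsto_const_nhds (x := (1:ℝ))
                  (f := (𝓝 (0:ℝ)))).sub (tendsto_id (x := (𝓝 (0:ℝ)))))))
            simpa [Function.comp_def, Real.rpow_one] using this
          simpa using (h1.mul h2).mono_left nhdsWithin_le_nhds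
        exact (ENNReal.continuous_ofReal.tendsto _).comp this
      · have hq0 : q x = 0 := le_antisymm (not_lt.mp hqx) (hq x)
        rw [hq0, ENNReal.ofReal_zero]
        have : ∀ᶠ α in 𝓝[>] (0:ℝ),
            ENNReal.ofReal (p x) ^ α * (0:ℝ≥0∞) ^ (1 - α) = 0 := by
          filter_upwards [hlt] with α hα
          rw [ENNReal.zero_rpow_of_pos (by linarith [hα.2]), mul_zero]
        exact Tendsto.congr' (this.mono fun α h => h.symm) tendsto_const_nhds
    · have hp0 : p x = 0 := le_antisymm (not_lt.mp hpx) (hp x)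
      simp only [if_neg hpx]
      have : ∀ᶠ α in 𝓝[>] (0:ℝ),
          ENNReal.ofReal (p x) ^ α * ENNReal.ofReal (q x) ^ (1 - α) = 0 := by
        filter_upwards [self_mem_nhdsWithin] with α hα
        rw [hp0, ENNReal.ofReal_zero, ENNReal.zero_rpow_of_pos hα, zero_mul]
      exact Tendsto.congr' (this.mono fun α h => h.symm) tendsto_const_nhds

end Aux

/-- For probability mass functions `p, q` on a countable set,
`lim_{α↓0} D_α(P‖Q) = −log Q({x : p x > 0})`. -/
theorem stmt12 {X : Type*} [Countable X]
    (p q : X → ℝ) (hp : ∀ x, 0 ≤ p x) (hq : ∀ x, 0 ≤ q x)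
    (hp1 : HasSum p 1) (hq1 : HasSum q 1) :
    Filter.Tendsto (fun α => renyiD α p q) (𝓝[>] (0 : ℝ))
      (𝓝 (-(ENNReal.log (∑' x, if 0 < p x then ENNReal.ofReal (q x) else 0)))) := by
  set c : ℝ≥0∞ := ∑' x, if 0 < p x then ENNReal.ofReal (q x) else 0 with hc
  have hS := aux_sum_tendsto p q hp hq hp1 hq1
  have hlog : Filter.Tendsto
      (fun α : ℝ => ENNReal.log (∑' x, ENNReal.ofReal (p x) ^ α * ENNReal.ofReal (q x) ^ (1 - α)))
      (𝓝[>] (0:ℝ)) (𝓝 (ENNReal.log c)) :=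
    (ENNReal.continuous_log.tendsto c).comp hS
  have hcoef : Filter.Tendsto (fun α : ℝ => (((α - 1)⁻¹ : ℝ) : EReal))
      (𝓝[>] (0:ℝ)) (𝓝 (-1 : EReal)) := by
    have h1 : Filter.Tendsto (fun α : ℝ => (α - 1)⁻¹) (𝓝 (0:ℝ)) (𝓝 (-1)) := by
      have hsub : Filter.Tendsto (fun α : ℝ => α - 1) (𝓝 (0:ℝ)) (𝓝 (-1)) := by
        have h0 : Filter.Tendsto (fun α : ℝ => α) (𝓝 (0:ℝ)) (𝓝 (0:ℝ)) := Filter.tendsto_id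
        have h1 : Filter.Tendsto (fun _ : ℝ => (1:ℝ)) (𝓝 (0:ℝ)) (𝓝 (1:ℝ)) := tendsto_const_nhds
        simpa using h0.sub h1
      have := hsub.inv₀ (by norm_num)
      simpa [inv_neg] using this
    have h2 : Filter.Tendsto (fun α : ℝ => (α - 1)⁻¹) (𝓝[>] (0:ℝ)) (𝓝 (-1)) :=
      h1.mono_left nhdsWithin_le_nhds
    have := (continuous_coe_real_ereal.tendsto (-1:ℝ)).comp h2
    simpa [Function.comp_def] using this
  have hlogc_ne_top : ENNReal.log c ≠ ⊤ := by
    have hle : c ≤ 1 := by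
      have h2 : c ≤ ∑' x, ENNReal.ofReal (q x) := by
        refine ENNReal.tsum_le_tsum fun x => ?_
        split_ifs <;> simp
      rw [← ENNReal.ofReal_tsum_of_nonneg hq hq1.summable, hq1.tsum_eq] at h2
      simpa using h2
    have hle' : ENNReal.log c ≤ 0 := by simpa using ENNReal.log_monotone hle
    exact ne_top_of_le_ne_top (by simp) hle'
  have hne0 : (-1 : EReal) ≠ 0 := by norm_num
  have hnebot : (-1 : EReal) ≠ ⊥ := by
    rw [show (-1 : EReal) = ((-1 : ℝ) : EReal) by norm_num]
    exact EReal.coe_ne_bot _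
  have hnetop : (-1 : EReal) ≠ ⊤ := by
    rw [show (-1 : EReal) = ((-1 : ℝ) : EReal) by norm_num]
    exact EReal.coe_ne_top _
  have hmulcont : ContinuousAt (fun r : EReal × EReal => r.1 * r.2) ((-1 : EReal), ENNReal.log c) :=
    EReal.continuousAt_mul (Or.inl hne0) (Or.inl hne0) (Or.inl hnebot) (Or.inl hnetop)
  have hmul : Filter.Tendsto
      (fun α : ℝ => (((α - 1)⁻¹ : ℝ) : EReal) *
        ENNReal.log (∑' x, ENNReal.ofReal (p x) ^ α * ENNReal.ofReal (q x) ^ (1 - α)))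
      (𝓝[>] (0:ℝ)) (𝓝 ((-1 : EReal) * ENNReal.log c)) :=
    hmulcont.tendsto.comp (hcoef.prodMk_nhds hlog)
  have hneg : (-1 : EReal) * ENNReal.log c = -(ENNReal.log c) := by
    rw [show (-1 : EReal) = -(1 : EReal) from rfl, EReal.neg_mul, one_mul]
  rw [hneg] at hmul
  refine Filter.Tendsto.congr' ?_ hmul
  filter_upwards [Ioo_mem_nhdsGT one_pos] with α hα
  rw [renyiD, if_neg hα.2.ne]
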